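/- Let σ₁, σ₂ > 0, U > 0 and 0 < K ≤ U, let 𝐊 = U + (U − K)·σ₂/σ₁, and let g̅(x) = (x − 𝐊)^+. Then g̅ is convex on ℝ, g(x) ≤ g̅(x) for all x ∈ ℝ, and g̅ is a minimal convex majorant of g: every convex function h : ℝ → ℝ with g(x) ≤ h(x) ≤ g̅(x) for all x satisfies h(x) = g̅(x) for all x. -/

import Mathlib

open MeasureTheory Filter Set

/-- Standard normal cumulative distribution function. -/
noncomputable def stdNormalCDF (x : ℝ) : ℝ :=
  (Real.sqrt (2 * Real.pi))⁻¹ * ∫ y in Set.Iic x, Real.exp (-(y ^ 2) / 2)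

/-- Black–Scholes call price with zero interest and dividend rates. -/
noncomputable def bsCall (S K τ σ : ℝ) : ℝ :=
  let d1 := (Real.log (S / K) + σ ^ 2 * τ / 2) / (σ * Real.sqrt τ)
  S * stdNormalCDF d1 - K * stdNormalCDF (d1 - σ * Real.sqrt τ)

/-- Black–Scholes put price with zero interest and dividend rates. -/
noncomputable def bsPut (S K τ σ : ℝ) : ℝ := bsCall S K τ σ - S + K

/-- The denominator appearing in the PCLVG call price formula. -/
noncomputable def pclvgD (σ1 σ2 U τ : ℝ) : ℝ :=
  1 / σ1 + 1 / σ2 - (1 / σ2 - 1 / σ1) * Real.exp (-2 * U / (σ1 * τ))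

/-- The explicit PCLVG call price `C^σ(U,K,τ)`. -/
noncomputable def pclvgCall (σ1 σ2 U K τ : ℝ) : ℝ :=
  if K < U then
    (U - K) +
      τ * Real.exp (-(U - K) / (σ1 * τ)) * (1 - Real.exp (-2 * K / (σ1 * τ))) /
        pclvgD σ1 σ2 U τ
  else
    τ * Real.exp (-(K - U) / (σ2 * τ)) * (1 - Real.exp (-2 * U / (σ1 * τ))) /
      pclvgD σ1 σ2 U τ

/-- The PCLVG put price `P^σ(U,K,τ) = C^σ(U,K,τ) − (U − K)`. -/
noncomputable def pclvgPut (σ1 σ2 U K τ : ℝ) : ℝ := pclvgCall σ1 σ2 U K τ - (U - K)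

/-- The static-hedge payoff function `g` from the weak reflection principle: for each fixed `x`
only finitely many summands are nonzero, so the `tsum` is well defined. -/
noncomputable def gFun (σ1 σ2 U K x : ℝ) : ℝ :=
  ∑' n : ℕ,
    (max (x - U - (U * (2 * (n : ℝ) + 1) - K) * σ2 / σ1) 0 -
     max (x - U - (U * (2 * (n : ℝ) + 1) + K) * σ2 / σ1) 0)

noncomputable def gTerm (σ1 σ2 U K x : ℝ) (n : ℕ) : ℝ :=
  max (x - U - (U * (2 * (n : ℝ) + 1) - K) * σ2 / σ1) 0 -
  max (x - U - (U * (2 * (n : ℝ) + 1) + K) * σ2 / σ1) 0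

lemma gTerm_nonneg {σ1 σ2 U K : ℝ} (h1 : 0 < σ1) (h2 : 0 < σ2) (hK : 0 ≤ K)
    (x : ℝ) (n : ℕ) : 0 ≤ gTerm σ1 σ2 U K x n := by
  have hle : (U * (2 * (n : ℝ) + 1) - K) * σ2 / σ1 ≤ (U * (2 * (n : ℝ) + 1) + K) * σ2 / σ1 := by
    apply (div_le_div_iff_of_pos_right h1).mpr
    nlinarith
  exact sub_nonneg.2 (max_le_max (by linarith) le_rfl)

lemma gTerm_zero {σ1 σ2 U K x : ℝ} (h1 : 0 < σ1) (h2 : 0 < σ2) (hK : 0 ≤ K) (n : ℕ)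
    (hx : x ≤ U + (U * (2 * (n : ℝ) + 1) - K) * σ2 / σ1) :
    gTerm σ1 σ2 U K x n = 0 := by
  have hle : (U * (2 * (n : ℝ) + 1) - K) * σ2 / σ1 ≤ (U * (2 * (n : ℝ) + 1) + K) * σ2 / σ1 := by
    apply (div_le_div_iff_of_pos_right h1).mpr
    nlinarith
  unfold gTerm
  rw [max_eq_right (by linarith), max_eq_right (by linarith)]
  ring

lemma gTerm_support {σ1 σ2 U K x : ℝ} (h1 : 0 < σ1) (h2 : 0 < σ2) (hU : 0 < U)
    (hK : 0 < K) (hKU : K ≤ U) :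
    ∃ N : ℕ, ∀ n, N ≤ n → gTerm σ1 σ2 U K x n = 0 := by
  have hc : 0 < 2 * U * σ2 / σ1 := by positivity
  obtain ⟨N, hN⟩ := exists_nat_gt (x / (2 * U * σ2 / σ1))
  refine ⟨N, fun n hn => ?_⟩
  apply gTerm_zero h1 h2 hK.le
  have h1' : x < (N : ℝ) * (2 * U * σ2 / σ1) := by
    rwa [div_lt_iff₀ hc] at hN
  have h2' : (N : ℝ) * (2 * U * σ2 / σ1) ≤ (n : ℝ) * (2 * U * σ2 / σ1) := by
    apply mul_le_mul_of_nonneg_right _ hc.le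
    exact_mod_cast hn
  have h3' : (n : ℝ) * (2 * U * σ2 / σ1) ≤ U + (U * (2 * (n : ℝ) + 1) - K) * σ2 / σ1 := by
    have hnn : (0:ℝ) ≤ (U - K) * σ2 / σ1 := div_nonneg (mul_nonneg (by linarith) h2.le) h1.le
    have e : U + (U * (2 * (n : ℝ) + 1) - K) * σ2 / σ1 - (n : ℝ) * (2 * U * σ2 / σ1) =
        U + (U - K) * σ2 / σ1 := by field_simp; ring
    linarith
  linarith

lemma gTerm_summable {σ1 σ2 U K x : ℝ} (h1 : 0 < σ1) (h2 : 0 < σ2) (hU : 0 < U)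
    (hK : 0 < K) (hKU : K ≤ U) : Summable (gTerm σ1 σ2 U K x) := by
  obtain ⟨N, hN⟩ := gTerm_support (x := x) h1 h2 hU hK hKU
  apply summable_of_ne_finset_zero (s := Finset.range N)
  intro n hn
  exact hN n (by simpa using hn)

lemma gTerm_telescope {σ1 σ2 U K x : ℝ} (h1 : 0 < σ1) (h2 : 0 < σ2) (hU : 0 < U)
    (hK : 0 < K) (hKU : K ≤ U) (n : ℕ) :
    gTerm σ1 σ2 U K x n ≤
      max (x - U - (U * (2 * (n : ℝ) + 1) - K) * σ2 / σ1) 0 -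
      max (x - U - (U * (2 * ((n : ℝ) + 1) + 1) - K) * σ2 / σ1) 0 := by
  unfold gTerm
  have hle : (U * (2 * (n : ℝ) + 1) + K) * σ2 / σ1 ≤
      (U * (2 * ((n : ℝ) + 1) + 1) - K) * σ2 / σ1 := by
    apply (div_le_div_iff_of_pos_right h1).mpr
    nlinarith
  have := max_le_max (sub_le_sub_left hle (x - U)) (le_refl (0:ℝ))
  linarith [max_le_max (show x - U - (U * (2 * ((n:ℝ) + 1) + 1) - K) * σ2 / σ1 ≤
    x - U - (U * (2 * (n:ℝ) + 1) + K) * σ2 / σ1 by linarith) (le_refl (0:ℝ))]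

lemma gFun_le {σ1 σ2 U K : ℝ} (h1 : 0 < σ1) (h2 : 0 < σ2) (hU : 0 < U)
    (hK : 0 < K) (hKU : K ≤ U) (x : ℝ) :
    gFun σ1 σ2 U K x ≤ max (x - (U + (U - K) * σ2 / σ1)) 0 := by
  obtain ⟨N, hN⟩ := gTerm_support (x := x) h1 h2 hU hK hKU
  have hsum : gFun σ1 σ2 U K x = ∑ n ∈ Finset.range N, gTerm σ1 σ2 U K x n := by
    apply tsum_eq_sum
    intro n hn
    exact hN n (by simpa using hn)
  set c : ℕ → ℝ := fun n => max (x - U - (U * (2 * (n : ℝ) + 1) - K) * σ2 / σ1) 0 with hc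
  have key : ∑ n ∈ Finset.range N, gTerm σ1 σ2 U K x n ≤ c 0 - c N := by
    rw [← Finset.sum_range_sub' c N]
    apply Finset.sum_le_sum
    intro n _
    have := gTerm_telescope (x := x) h1 h2 hU hK hKU n
    simp only [hc]
    push_cast
    push_cast at this
    linarith
  have hcN : 0 ≤ c N := le_max_right _ _
  have hc0 : c 0 = max (x - (U + (U - K) * σ2 / σ1)) 0 := by
    simp only [hc]
    norm_num
    ring_nf
  rw [hsum]
  rw [hc0] at key
  linarith

lemma gFun_eq {σ1 σ2 U K x : ℝ} (h1 : 0 < σ1) (h2 : 0 < σ2) (hU : 0 < U)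
    (hK : 0 < K) (hKU : K ≤ U) (hx : x ≤ U + (U + K) * σ2 / σ1) :
    gFun σ1 σ2 U K x = max (x - (U + (U - K) * σ2 / σ1)) 0 := by
  refine le_antisymm (gFun_le h1 h2 hU hK hKU x) ?_
  have h0 : max (x - (U + (U - K) * σ2 / σ1)) 0 ≤ gTerm σ1 σ2 U K x 0 := by
    unfold gTerm
    have e1 : x - U - (U * (2 * ((0:ℕ) : ℝ) + 1) - K) * σ2 / σ1 = x - (U + (U - K) * σ2 / σ1) := by
      push_cast; ring
    have e2 : x - U - (U * (2 * ((0:ℕ) : ℝ) + 1) + K) * σ2 / σ1 ≤ 0 := by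
      push_cast
      have : (U * (2 * (0:ℝ) + 1) + K) * σ2 / σ1 = (U + K) * σ2 / σ1 := by ring
      rw [this]; linarith
    rw [e1, max_eq_right e2]
    simp
  calc max (x - (U + (U - K) * σ2 / σ1)) 0 ≤ gTerm σ1 σ2 U K x 0 := h0
    _ ≤ gFun σ1 σ2 U K x :=
      Summable.le_tsum (gTerm_summable h1 h2 hU hK hKU) 0 (fun n _ => gTerm_nonneg h1 h2 hK.le x n)

lemma maxConvex (c : ℝ) : ConvexOn ℝ Set.univ (fun x : ℝ => max (x - c) 0) := by
  refine ⟨convex_univ, ?_⟩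
  intro x _ y _ a b ha hb hab
  simp only [smul_eq_mul]
  apply max_le
  · have h1 := mul_le_mul_of_nonneg_left (le_max_left (x - c) 0) ha
    have h2 := mul_le_mul_of_nonneg_left (le_max_left (y - c) 0) hb
    have e : a * x + b * y - c = a * (x - c) + b * (y - c) := by linear_combination c * hab
    linarith
  · have h1 := mul_le_mul_of_nonneg_left (le_max_right (x - c) 0) ha
    have h2 := mul_le_mul_of_nonneg_left (le_max_right (y - c) 0) hb
    linarith

/-- `g̅(x) = (x−𝐊)⁺` is a minimal convex majorant of `g`: any convex function
squeezed between `g` and `g̅` equals `g̅`. -/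
theorem gFun_minimal_convex_majorant (σ1 σ2 U K : ℝ)
    (h1 : 0 < σ1) (h2 : 0 < σ2) (hU : 0 < U) (hK : 0 < K) (hKU : K ≤ U) :
    ConvexOn ℝ Set.univ (fun x : ℝ => max (x - (U + (U - K) * σ2 / σ1)) 0) ∧
    (∀ x : ℝ, gFun σ1 σ2 U K x ≤ max (x - (U + (U - K) * σ2 / σ1)) 0) ∧
    (∀ h : ℝ → ℝ, ConvexOn ℝ Set.univ h →
      (∀ x : ℝ, gFun σ1 σ2 U K x ≤ h x) →
      (∀ x : ℝ, h x ≤ max (x - (U + (U - K) * σ2 / σ1)) 0) →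
      ∀ x : ℝ, h x = max (x - (U + (U - K) * σ2 / σ1)) 0) := by
  set c := U + (U - K) * σ2 / σ1 with hc
  set B0 := U + (U + K) * σ2 / σ1 with hB0
  have hcB : c < B0 := by
    rw [hc, hB0]
    have : (U - K) * σ2 / σ1 < (U + K) * σ2 / σ1 := by
      apply (div_lt_div_iff_of_pos_right h1).mpr
      nlinarith
    linarith
  refine ⟨maxConvex c, fun x => gFun_le h1 h2 hU hK hKU x, ?_⟩
  intro h hconv hgh hhg x
  have hle : ∀ y : ℝ, y ≤ B0 → h y = max (y - c) 0 := by
    intro y hy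
    refine le_antisymm (hhg y) ?_
    rw [← gFun_eq h1 h2 hU hK hKU hy]
    exact hgh y
  rcases le_or_gt x B0 with hx | hx
  · exact hle x hx
  · have hxc : c < x := lt_trans hcB hx
    have hxc' : (0:ℝ) < x - c := by linarith
    set a := (x - B0) / (x - c) with ha'
    set b := (B0 - c) / (x - c) with hb'
    have ha : 0 ≤ a := div_nonneg (by linarith) hxc'.le
    have hbpos : 0 < b := div_pos (by linarith) hxc'
    have hab : a + b = 1 := by
      rw [ha', hb', ← add_div, div_eq_one_iff_eq (by linarith)]
      ring
    have hpt : a • c + b • x = B0 := by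
      simp only [smul_eq_mul, ha', hb']
      field_simp
      ring
    have := hconv.2 (Set.mem_univ c) (Set.mem_univ x) ha hbpos.le hab
    rw [hpt] at this
    simp only [smul_eq_mul] at this
    have hhc : h c = 0 := by
      rw [hle c hcB.le, max_eq_right (by linarith)]
    have hhB0 : h B0 = B0 - c := by
      rw [hle B0 le_rfl, max_eq_left (by linarith)]
    rw [hhc, hhB0, mul_zero, zero_add] at this
    have hbx : b * (x - c) = B0 - c := by
      rw [hb']
      field_simp
    have hxle : x - c ≤ h x := by
      have : b * (x - c) ≤ b * h x := by rw [hbx]; exact this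
      exact le_of_mul_le_mul_left this hbpos
    have hxge : h x ≤ x - c := by
      have := hhg x
      rwa [max_eq_left (by linarith)] at this
    rw [max_eq_left (by linarith)]
    linarith
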